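/- arXiv:1108.1891 — 6 statements merged into one kernel-verified Lean document; each statement's English description precedes it below -/
import Mathlib

section
/- For every real number α with 0 < α ≤ 1/2 and every s ∈ ℝ, the integral ∫_0^1 |t + s|^{2α−1} dt satisfies ∫_0^1 |t + s|^{2α−1} dt ≤ 1/(α·2^{2α}). -/
open MeasureTheory intervalIntegral Set Real
open scoped NNReal

lemma abs_rpow_intervalIntegrable {p : ℝ} (hp : -1 < p) (a b : ℝ) :
    IntervalIntegrable (fun u : ℝ => |u| ^ p) volume a b := by
  have key : ∀ c : ℝ, 0 ≤ c → IntervalIntegrable (fun u : ℝ => |u| ^ p) volume 0 c := by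
    intro c hc
    refine (intervalIntegrable_rpow' hp (a := 0) (b := c)).congr ?_
    intro x hx
    rw [uIoc_of_le hc] at hx
    simp [abs_of_nonneg hx.1.le]
  have key2 : ∀ c : ℝ, IntervalIntegrable (fun u : ℝ => |u| ^ p) volume 0 c := by
    intro c
    rcases le_total 0 c with hc | hc
    · exact key c hc
    · rw [IntervalIntegrable.iff_comp_neg, neg_zero]
      simpa [abs_neg] using key (-c) (by linarith)
  exact (key2 a).symm.trans (key2 b)

lemma integral_abs_rpow_of_nonneg {p : ℝ} (hp : -1 < p) {a b : ℝ} (ha : 0 ≤ a) (hb : 0 ≤ b) :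
    (∫ u in a..b, |u| ^ p) = (b ^ (p + 1) - a ^ (p + 1)) / (p + 1) := by
  rw [intervalIntegral.integral_congr (g := fun u : ℝ => u ^ p) ?_,
    integral_rpow (Or.inl hp)]
  intro u hu
  rcases Set.mem_uIcc.1 hu with ⟨h1, _⟩ | ⟨h1, _⟩ <;>
    simp [abs_of_nonneg (by linarith : (0:ℝ) ≤ u)]

lemma integral_abs_rpow_of_nonpos {p : ℝ} (hp : -1 < p) {a b : ℝ} (ha : a ≤ 0) (hb : b ≤ 0) :
    (∫ u in a..b, |u| ^ p) = ((-a) ^ (p + 1) - (-b) ^ (p + 1)) / (p + 1) := by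
  have h := intervalIntegral.integral_comp_neg (a := a) (b := b) (fun u : ℝ => |u| ^ p)
  simp only [abs_neg] at h
  rw [h, integral_abs_rpow_of_nonneg hp (by linarith) (by linarith)]

/-- For `0 < α ≤ 1/2` and any `s ∈ ℝ`, `∫₀¹ |t + s|^(2α-1) dt ≤ 1/(α 2^(2α))`. -/
theorem integral_abs_rpow_le {α : ℝ} (hα0 : 0 < α) (hα : α ≤ 1 / 2) (s : ℝ) :
    (∫ t in (0 : ℝ)..1, |t + s| ^ (2 * α - 1)) ≤ 1 / (α * (2 : ℝ) ^ (2 * α)) := by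
  set p : ℝ := 2 * α - 1 with hpdef
  have hp : -1 < p := by simp only [hpdef]; linarith
  have hpq : p + 1 = 2 * α := by rw [hpdef]; ring
  have hq0 : (0:ℝ) < 2 * α := by linarith
  have hq1 : 2 * α ≤ 1 := by linarith
  have h2pos : (0:ℝ) < (2:ℝ) ^ (2 * α) := Real.rpow_pos_of_pos two_pos _
  have hRpos : (0:ℝ) < α * (2:ℝ) ^ (2 * α) := by positivity
  -- change of variables
  have hsub : (∫ t in (0 : ℝ)..1, |t + s| ^ p) = ∫ u in s..(1 + s), |u| ^ p := by
    simpa using intervalIntegral.integral_comp_add_right (a := 0) (b := 1) (fun u : ℝ => |u| ^ p) s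
  rw [hsub]
  -- subadditivity: (a+1)^(2α) ≤ a^(2α) + 1 for a ≥ 0
  have sub : ∀ a : ℝ, 0 ≤ a → (a + 1) ^ (2 * α) ≤ a ^ (2 * α) + 1 := by
    intro a ha
    have h := NNReal.rpow_add_le_add_rpow (Real.toNNReal a) 1 hq0.le hq1
    have h2 : ((Real.toNNReal a : ℝ) + 1) ^ (2 * α)
        ≤ (Real.toNNReal a : ℝ) ^ (2 * α) + (1:ℝ) ^ (2 * α) := by exact_mod_cast h
    rw [Real.coe_toNNReal a ha, Real.one_rpow] at h2
    exact h2
  -- 1/(2α) ≤ 1/(α·2^(2α))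
  have hhalf : (1:ℝ) / (2 * α) ≤ 1 / (α * (2:ℝ) ^ (2 * α)) := by
    apply one_div_le_one_div_of_le hRpos
    have h2le : (2:ℝ) ^ (2 * α) ≤ 2 := by
      calc (2:ℝ) ^ (2 * α) ≤ (2:ℝ) ^ (1:ℝ) :=
            Real.rpow_le_rpow_of_exponent_le one_le_two hq1
        _ = 2 := Real.rpow_one 2
    nlinarith
  rcases le_or_gt 0 s with hs | hs
  · -- 0 ≤ s
    rw [integral_abs_rpow_of_nonneg hp hs (by linarith), hpq]
    have h1 : (1 + s) ^ (2*α) - s ^ (2*α) ≤ 1 := by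
      have := sub s hs
      have e : s + 1 = 1 + s := by ring
      rw [e] at this; linarith
    calc ((1 + s) ^ (2*α) - s ^ (2*α)) / (2*α) ≤ 1 / (2*α) := by
          gcongr
      _ ≤ 1 / (α * (2:ℝ) ^ (2*α)) := hhalf
  rcases le_or_gt (1 + s) 0 with hs1 | hs1
  · -- 1 + s ≤ 0
    rw [integral_abs_rpow_of_nonpos hp (by linarith) hs1, hpq]
    have h1 : (-s) ^ (2*α) - (-(1 + s)) ^ (2*α) ≤ 1 := by
      have := sub (-(1+s)) (by linarith)
      have e : -(1+s) + 1 = -s := by ring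
      rw [e] at this; linarith
    calc ((-s) ^ (2*α) - (-(1+s)) ^ (2*α)) / (2*α) ≤ 1 / (2*α) := by
          gcongr
      _ ≤ 1 / (α * (2:ℝ) ^ (2*α)) := hhalf
  · -- -1 < s < 0
    have hsplit : (∫ u in s..(1+s), |u| ^ p)
        = (∫ u in s..0, |u| ^ p) + ∫ u in (0:ℝ)..(1+s), |u| ^ p :=
      (intervalIntegral.integral_add_adjacent_intervals
        (abs_rpow_intervalIntegrable hp s 0) (abs_rpow_intervalIntegrable hp 0 (1+s))).symm
    rw [hsplit, integral_abs_rpow_of_nonpos hp hs.le le_rfl,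
      integral_abs_rpow_of_nonneg hp le_rfl hs1.le, hpq]
    rw [neg_zero, Real.zero_rpow hq0.ne']
    -- concavity
    have hcon := (Real.concaveOn_rpow hq0.le hq1).2
      (Set.mem_Ici.2 (by linarith : (0:ℝ) ≤ -s))
      (Set.mem_Ici.2 (by linarith : (0:ℝ) ≤ 1 + s))
      (by norm_num : (0:ℝ) ≤ 1/2) (by norm_num : (0:ℝ) ≤ 1/2)
      (by norm_num : (1/2:ℝ) + 1/2 = 1)
    have hmid : (1/2 : ℝ) • (-s) + (1/2 : ℝ) • (1 + s) = 1/2 := by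
      simp only [smul_eq_mul]; ring
    rw [hmid] at hcon
    simp only [smul_eq_mul] at hcon
    have hkey : (-s) ^ (2*α) + (1 + s) ^ (2*α) ≤ 2 * (1/2 : ℝ) ^ (2*α) := by linarith
    have hhalfpow : (1/2 : ℝ) ^ (2*α) = 1 / (2:ℝ) ^ (2*α) := by
      rw [Real.div_rpow zero_le_one (by norm_num), Real.one_rpow]
    calc ((-s) ^ (2*α) - 0) / (2*α) + ((1+s) ^ (2*α) - 0) / (2*α)
        = ((-s) ^ (2*α) + (1+s) ^ (2*α)) / (2*α) := by ring
      _ ≤ (2 * (1/2 : ℝ) ^ (2*α)) / (2*α) := by gcongr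
      _ = 1 / (α * (2:ℝ) ^ (2*α)) := by
          rw [hhalfpow]; field_simp
end

section
/- Let E be a real inner product space, u, v ∈ E with v ≠ 0, and let α be a real number with 0 < α ≤ 1/2. Then ∫_0^1 ‖u + t·v‖^{2α−1} dt ≤ (1/(α·2^{2α}))·‖v‖^{2α−1}. -/
open MeasureTheory intervalIntegral Set

private lemma aux_concave {q c : ℝ} (hq0 : 0 < q) (hq1 : q ≤ 1) (hc0 : 0 ≤ c) (hc1 : c ≤ 1) :
    c ^ q + (1 - c) ^ q ≤ 2 * (1 / 2 : ℝ) ^ q := by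
  have h := (Real.concaveOn_rpow hq0.le hq1).2 (Set.mem_Ici.mpr hc0)
    (Set.mem_Ici.mpr (by linarith : (0:ℝ) ≤ 1 - c)) (by norm_num : (0:ℝ) ≤ 1/2)
    (by norm_num : (0:ℝ) ≤ 1/2) (by norm_num)
  simp only [smul_eq_mul] at h
  have heq : (1/2 : ℝ) * c + (1/2 : ℝ) * (1 - c) = 1/2 := by ring
  rw [heq] at h
  linarith

/-- For `0 < α ≤ 1/2`, vectors `u, v` in a real inner product space with `v ≠ 0`,
`∫₀¹ ‖u + t v‖^(2α-1) dt ≤ (1/(α 2^(2α))) ‖v‖^(2α-1)`. -/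
theorem integral_norm_rpow_segment_le {E : Type*} [NormedAddCommGroup E]
    [InnerProductSpace ℝ E] (u v : E) (hv : v ≠ 0)
    {α : ℝ} (hα0 : 0 < α) (hα : α ≤ 1 / 2) :
    (∫ t in (0 : ℝ)..1, ‖u + t • v‖ ^ (2 * α - 1))
      ≤ (1 / (α * (2 : ℝ) ^ (2 * α))) * ‖v‖ ^ (2 * α - 1) := by
  set p : ℝ := 2 * α - 1 with hp_def
  have hp0 : p ≤ 0 := by simp only [hp_def]; linarith
  have hp1 : (-1 : ℝ) < p := by simp only [hp_def]; linarith
  have hq0 : (0 : ℝ) < p + 1 := by linarith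
  have hvpos : (0 : ℝ) < ‖v‖ := norm_pos_iff.mpr hv
  set t₀ : ℝ := -(inner ℝ u v : ℝ) / ‖v‖ ^ 2 with ht₀_def
  have ht₀ : t₀ * ‖v‖ ^ 2 = -(inner ℝ u v : ℝ) := by
    rw [ht₀_def, div_mul_cancel₀ _ (pow_ne_zero 2 hvpos.ne')]
  -- key geometric inequality
  have hkey : ∀ t : ℝ, |t - t₀| * ‖v‖ ≤ ‖u + t • v‖ := by
    intro t
    have h1 : ‖u + t • v‖ ^ 2 = ‖u‖ ^ 2 + 2 * (t * (inner ℝ u v : ℝ)) + t ^ 2 * ‖v‖ ^ 2 := by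
      rw [@norm_add_sq_real, real_inner_smul_right, norm_smul]
      simp [Real.norm_eq_abs, mul_pow, sq_abs]
    have hcs : (inner ℝ u v : ℝ) * (inner ℝ u v : ℝ) ≤ (‖u‖ * ‖u‖) * (‖v‖ * ‖v‖) := by
      have := real_inner_mul_inner_self_le u v
      rwa [real_inner_self_eq_norm_mul_norm, real_inner_self_eq_norm_mul_norm] at this
    have ht₀sq : (t₀ * ‖v‖ ^ 2) * (t₀ * ‖v‖ ^ 2) = (inner ℝ u v : ℝ) * (inner ℝ u v : ℝ) := by
      rw [ht₀]; ring
    have ht₀2 : t₀ ^ 2 * ‖v‖ ^ 2 ≤ ‖u‖ ^ 2 := by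
      nlinarith [hcs, ht₀sq, mul_pos hvpos hvpos]
    have hsq : (|t - t₀| * ‖v‖) ^ 2 ≤ ‖u + t • v‖ ^ 2 := by
      rw [mul_pow, sq_abs, h1]
      have h2t : t * (t₀ * ‖v‖ ^ 2) = t * (-(inner ℝ u v : ℝ)) := by rw [ht₀]
      nlinarith [ht₀2, h2t]
    exact (pow_le_pow_iff_left₀ (by positivity) (norm_nonneg _) two_ne_zero).mp hsq
  set c : ℝ := max 0 (min 1 t₀) with hc_def
  have hc0 : 0 ≤ c := le_max_left _ _
  have hc1 : c ≤ 1 := max_le zero_le_one (min_le_left _ _)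
  have hclamp : ∀ t ∈ Set.Icc (0:ℝ) 1, |t - c| ≤ |t - t₀| := by
    intro t ht
    obtain ⟨ht0, ht1⟩ := ht
    rcases le_total t₀ 0 with h | h
    · have hc : c = 0 := by
        rw [hc_def, min_eq_right (h.trans zero_le_one), max_eq_left h]
      rw [hc, sub_zero, abs_of_nonneg ht0, abs_of_nonneg (by linarith)]
      linarith
    · rcases le_total 1 t₀ with h1 | h1
      · have hc : c = 1 := by
          rw [hc_def, min_eq_left h1, max_eq_right zero_le_one]
        rw [hc, abs_of_nonpos (by linarith), abs_of_nonpos (by linarith)]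
        linarith
      · have hc : c = t₀ := by
          rw [hc_def, min_eq_right h1, max_eq_right h]
        rw [hc]
  -- a.e. non-equality with c
  have hne : ∀ᵐ t : ℝ ∂volume, t ≠ c := by
    have hs : {t : ℝ | ¬ t ≠ c} = {c} := by ext; simp
    rw [MeasureTheory.ae_iff, hs]
    exact measure_singleton c
  have hf_nonneg : ∀ t : ℝ, 0 ≤ ‖u + t • v‖ ^ p := fun t => Real.rpow_nonneg (norm_nonneg _) _
  have hf_meas : ∀ s : Set ℝ, AEStronglyMeasurable (fun t : ℝ => ‖u + t • v‖ ^ p)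
      (volume.restrict s) := by
    intro s
    have hm1 : Measurable fun t : ℝ => ‖u + t • v‖ :=
      (continuous_const.add (continuous_id.smul continuous_const)).norm.measurable
    exact (hm1.pow measurable_const).aestronglyMeasurable.restrict
  -- pointwise bounds
  have hbd1 : ∀ t ∈ Set.Icc (0:ℝ) c, t ≠ c → ‖u + t • v‖ ^ p ≤ (c - t) ^ p * ‖v‖ ^ p := by
    intro t ht hne'
    obtain ⟨ht0, htc⟩ := ht
    have htc' : t < c := lt_of_le_of_ne htc hne'
    have hpos : 0 < (c - t) * ‖v‖ := by
      have : 0 < c - t := by linarith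
      positivity
    have hle : (c - t) * ‖v‖ ≤ ‖u + t • v‖ := by
      have h1 : |t - c| = c - t := by rw [abs_sub_comm, abs_of_nonneg (by linarith)]
      calc (c - t) * ‖v‖ = |t - c| * ‖v‖ := by rw [h1]
        _ ≤ |t - t₀| * ‖v‖ :=
            mul_le_mul_of_nonneg_right (hclamp t ⟨ht0, htc.trans hc1⟩) (norm_nonneg _)
        _ ≤ ‖u + t • v‖ := hkey t
    calc ‖u + t • v‖ ^ p ≤ ((c - t) * ‖v‖) ^ p :=
          Real.rpow_le_rpow_of_nonpos hpos hle hp0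
      _ = (c - t) ^ p * ‖v‖ ^ p := Real.mul_rpow (by linarith) (norm_nonneg _)
  have hbd2 : ∀ t ∈ Set.Icc c (1:ℝ), t ≠ c → ‖u + t • v‖ ^ p ≤ (t - c) ^ p * ‖v‖ ^ p := by
    intro t ht hne'
    obtain ⟨htc, ht1⟩ := ht
    have htc' : c < t := lt_of_le_of_ne htc (Ne.symm hne')
    have hpos : 0 < (t - c) * ‖v‖ := by
      have : 0 < t - c := by linarith
      positivity
    have hle : (t - c) * ‖v‖ ≤ ‖u + t • v‖ := by
      have h1 : |t - c| = t - c := abs_of_nonneg (by linarith)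
      calc (t - c) * ‖v‖ = |t - c| * ‖v‖ := by rw [h1]
        _ ≤ |t - t₀| * ‖v‖ :=
            mul_le_mul_of_nonneg_right (hclamp t ⟨hc0.trans htc, ht1⟩) (norm_nonneg _)
        _ ≤ ‖u + t • v‖ := hkey t
    calc ‖u + t • v‖ ^ p ≤ ((t - c) * ‖v‖) ^ p :=
          Real.rpow_le_rpow_of_nonpos hpos hle hp0
      _ = (t - c) ^ p * ‖v‖ ^ p := Real.mul_rpow (by linarith) (norm_nonneg _)
  -- integrability of comparison functions
  have hg1 : IntervalIntegrable (fun t : ℝ => (c - t) ^ p * ‖v‖ ^ p) volume 0 c := by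
    have h := ((intervalIntegrable_rpow' (a := 0) (b := c) hp1).comp_sub_left c).symm
    simpa using h.mul_const (‖v‖ ^ p)
  have hg2 : IntervalIntegrable (fun t : ℝ => (t - c) ^ p * ‖v‖ ^ p) volume c 1 := by
    have h := (intervalIntegrable_rpow' (a := 0) (b := 1 - c) hp1).comp_sub_right c
    simpa using h.mul_const (‖v‖ ^ p)
  -- integrability of f on each piece
  have hf1 : IntervalIntegrable (fun t : ℝ => ‖u + t • v‖ ^ p) volume 0 c := by
    rw [intervalIntegrable_iff, uIoc_of_le hc0]
    have hg1' : IntegrableOn (fun t : ℝ => (c - t) ^ p * ‖v‖ ^ p) (Set.Ioc 0 c) volume := by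
      exact hg1.1
    refine hg1'.mono' (hf_meas _) ?_
    filter_upwards [ae_restrict_of_ae hne, ae_restrict_mem measurableSet_Ioc] with t htne htm
    rw [Real.norm_eq_abs, abs_of_nonneg (hf_nonneg t)]
    exact hbd1 t (Set.Ioc_subset_Icc_self htm) htne
  have hf2 : IntervalIntegrable (fun t : ℝ => ‖u + t • v‖ ^ p) volume c 1 := by
    rw [intervalIntegrable_iff, uIoc_of_le hc1]
    have hg2' : IntegrableOn (fun t : ℝ => (t - c) ^ p * ‖v‖ ^ p) (Set.Ioc c 1) volume := by
      exact hg2.1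
    refine hg2'.mono' (hf_meas _) ?_
    filter_upwards [ae_restrict_of_ae hne, ae_restrict_mem measurableSet_Ioc] with t htne htm
    rw [Real.norm_eq_abs, abs_of_nonneg (hf_nonneg t)]
    exact hbd2 t (Set.Ioc_subset_Icc_self htm) htne
  -- compare integrals on each piece
  have hI1 : (∫ t in (0:ℝ)..c, ‖u + t • v‖ ^ p) ≤ ∫ t in (0:ℝ)..c, (c - t) ^ p * ‖v‖ ^ p := by
    refine integral_mono_ae_restrict hc0 hf1 hg1 ?_
    filter_upwards [ae_restrict_of_ae hne, ae_restrict_mem measurableSet_Icc] with t htne htm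
    exact hbd1 t htm htne
  have hI2 : (∫ t in c..(1:ℝ), ‖u + t • v‖ ^ p) ≤ ∫ t in c..(1:ℝ), (t - c) ^ p * ‖v‖ ^ p := by
    refine integral_mono_ae_restrict hc1 hf2 hg2 ?_
    filter_upwards [ae_restrict_of_ae hne, ae_restrict_mem measurableSet_Icc] with t htne htm
    exact hbd2 t htm htne
  -- compute comparison integrals
  have hJ1 : (∫ t in (0:ℝ)..c, (c - t) ^ p) = c ^ (p + 1) / (p + 1) := by
    rw [intervalIntegral.integral_comp_sub_left (fun s => s ^ p) c]
    simp only [sub_self, sub_zero]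
    rw [integral_rpow (Or.inl hp1), Real.zero_rpow (ne_of_gt hq0), sub_zero]
  have hJ2 : (∫ t in c..(1:ℝ), (t - c) ^ p) = (1 - c) ^ (p + 1) / (p + 1) := by
    rw [intervalIntegral.integral_comp_sub_right (fun s => s ^ p) c]
    simp only [sub_self]
    rw [integral_rpow (Or.inl hp1), Real.zero_rpow (ne_of_gt hq0), sub_zero]
  have hsplit : (∫ t in (0:ℝ)..1, ‖u + t • v‖ ^ p)
      = (∫ t in (0:ℝ)..c, ‖u + t • v‖ ^ p) + ∫ t in c..(1:ℝ), ‖u + t • v‖ ^ p :=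
    (intervalIntegral.integral_add_adjacent_intervals hf1 hf2).symm
  have hconc : c ^ (p + 1) + (1 - c) ^ (p + 1) ≤ 2 * (1 / 2 : ℝ) ^ (p + 1) :=
    aux_concave hq0 (by simp only [hp_def]; linarith) hc0 hc1
  have hvp : (0:ℝ) < ‖v‖ ^ p := Real.rpow_pos_of_pos hvpos _
  have hfinal : (2 * (1 / 2 : ℝ) ^ (p + 1) / (p + 1)) * ‖v‖ ^ p
      = (1 / (α * (2 : ℝ) ^ (2 * α))) * ‖v‖ ^ p := by
    have h2 : ((1 : ℝ) / 2) ^ (p + 1) = ((2:ℝ) ^ (p+1))⁻¹ := by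
      rw [one_div, Real.inv_rpow (by norm_num)]
    have h2pos : (0:ℝ) < (2:ℝ) ^ (p + 1) := Real.rpow_pos_of_pos (by norm_num) _
    have hpq : p + 1 = 2 * α := by simp only [hp_def]; ring
    rw [h2, hpq]
    field_simp
  calc (∫ t in (0 : ℝ)..1, ‖u + t • v‖ ^ p)
      = (∫ t in (0:ℝ)..c, ‖u + t • v‖ ^ p) + ∫ t in c..(1:ℝ), ‖u + t • v‖ ^ p := hsplit
    _ ≤ (∫ t in (0:ℝ)..c, (c - t) ^ p * ‖v‖ ^ p) + ∫ t in c..(1:ℝ), (t - c) ^ p * ‖v‖ ^ p :=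
        add_le_add hI1 hI2
    _ = (c ^ (p+1) / (p+1)) * ‖v‖ ^ p + ((1 - c) ^ (p+1) / (p+1)) * ‖v‖ ^ p := by
        rw [intervalIntegral.integral_mul_const, intervalIntegral.integral_mul_const, hJ1, hJ2]
    _ = (c ^ (p+1) + (1 - c) ^ (p+1)) / (p+1) * ‖v‖ ^ p := by ring
    _ ≤ (2 * (1 / 2 : ℝ) ^ (p + 1) / (p + 1)) * ‖v‖ ^ p := by
        apply mul_le_mul_of_nonneg_right _ hvp.le
        exact div_le_div_of_nonneg_right hconc hq0.le |>.trans_eq rfl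
    _ = (1 / (α * (2 : ℝ) ^ (2 * α))) * ‖v‖ ^ p := hfinal
end

section
/- Let N be a positive integer and M ∈ ℝ^{N×N} a symmetric positive semidefinite matrix such that I − M is also positive semidefinite. Then ‖(I − M)^{1/2} − I‖_F ≤ trace(M), where (I − M)^{1/2} denotes the principal positive-semidefinite square root of I − M. -/
open Matrix

/-- Frobenius norm of a real `N × N` matrix. -/
noncomputable def frobNorm {N : ℕ} (A : Matrix (Fin N) (Fin N) ℝ) : ℝ :=
  Real.sqrt (∑ i, ∑ j, (A i j) ^ 2)

section

open scoped ComplexOrder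

/-- The positive semidefinite square root of a positive semidefinite matrix
(the definition `Matrix.PosSemidef.sqrt` of the older Mathlib, restored verbatim). -/
noncomputable def Matrix.PosSemidef.sqrt {n : Type*} [Fintype n] [DecidableEq n] {𝕜 : Type*}
    [RCLike 𝕜] {A : Matrix n n 𝕜} (hA : A.PosSemidef) : Matrix n n 𝕜 :=
  hA.1.eigenvectorUnitary.1 * diagonal ((↑) ∘ (√·) ∘ hA.1.eigenvalues) *
  (star hA.1.eigenvectorUnitary : Matrix n n 𝕜)

end

/-- If `M` is positive semidefinite and `I − M` is positive semidefinite, then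
`‖(I − M)^{1/2} − I‖_F ≤ trace M`. -/
theorem frobNorm_sqrt_sub_one_le_trace {N : ℕ} (hN : 0 < N)
    (M : Matrix (Fin N) (Fin N) ℝ) (hM : M.PosSemidef)
    (hIM : ((1 : Matrix (Fin N) (Fin N) ℝ) - M).PosSemidef) :
    frobNorm (hIM.sqrt - 1) ≤ M.trace := by
  classical
  have h := hIM.1
  set U : Matrix (Fin N) (Fin N) ℝ := (h.eigenvectorUnitary : Matrix (Fin N) (Fin N) ℝ) with hUdef
  set μ : Fin N → ℝ := h.eigenvalues with hμdef
  have hU1 : star U * U = 1 := Unitary.coe_star_mul_self _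
  have hU2 : U * star U = 1 := Unitary.coe_mul_star_self _
  have hspec : star U * ((1 : Matrix (Fin N) (Fin N) ℝ) - M) * U = diagonal μ := by
    have hA : (1 - M) = U * diagonal μ * star U := by
      have := h.spectral_theorem
      simpa [RCLike.ofReal_real_eq_id] using this
    rw [hA]
    simp only [Matrix.mul_assoc]
    rw [hU1, Matrix.mul_one, ← Matrix.mul_assoc, hU1, Matrix.one_mul]
  have hsqrt : hIM.sqrt = U * diagonal (fun i => Real.sqrt (μ i)) * star U := by
    rfl
  set g : Fin N → ℝ := fun i => Real.sqrt (μ i) - 1 with hgdef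
  have hdg : diagonal g = diagonal (fun i => Real.sqrt (μ i)) - 1 := by
    ext i j
    by_cases hij : i = j <;> simp [hij, diagonal, Matrix.one_apply, g]
  have hS : hIM.sqrt - 1 = U * diagonal g * star U := by
    rw [hsqrt, hdg, Matrix.mul_sub, Matrix.sub_mul, Matrix.mul_one, hU2]
  have hSS : (hIM.sqrt - 1) * (hIM.sqrt - 1)
      = U * diagonal (fun i => g i * g i) * star U := by
    rw [hS]
    have : U * diagonal g * star U * (U * diagonal g * star U)
        = U * (diagonal g * ((star U * U) * (diagonal g * star U))) := by
      simp only [Matrix.mul_assoc]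
    rw [this, hU1, Matrix.one_mul, ← Matrix.mul_assoc (diagonal g),
      diagonal_mul_diagonal, ← Matrix.mul_assoc]
  -- symmetry of sqrt - 1
  have hsym : (hIM.sqrt - 1)ᵀ = hIM.sqrt - 1 := by
    have h1 : (hIM.sqrt)ᵀ = hIM.sqrt := by
      simp [hsqrt, Matrix.star_eq_conjTranspose, Matrix.transpose_mul, Matrix.mul_assoc]
    rw [Matrix.transpose_sub, h1, Matrix.transpose_one]
  -- Frobenius sum as trace
  have key : ∀ A : Matrix (Fin N) (Fin N) ℝ,
      (∑ i, ∑ j, (A i j) ^ 2) = (Aᵀ * A).trace := by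
    intro A
    rw [Finset.sum_comm]
    simp [Matrix.trace, Matrix.mul_apply, Matrix.diag, sq]
  have hT : (∑ i, ∑ j, ((hIM.sqrt - 1) i j) ^ 2) = ∑ i, g i ^ 2 := by
    rw [key, hsym, hSS, Matrix.trace_mul_comm, ← Matrix.mul_assoc, hU1,
      Matrix.one_mul, Matrix.trace_diagonal]
    simp [sq]
  -- trace of M
  have htr : M.trace = ∑ i, (1 - μ i) := by
    have h1M : ((1 : Matrix (Fin N) (Fin N) ℝ) - M).trace = ∑ i, μ i := by
      conv_lhs => rw [h.spectral_theorem, Unitary.conjStarAlgAut_apply]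
      rw [Matrix.trace_mul_comm, ← Matrix.mul_assoc, hU1, Matrix.one_mul,
        Matrix.trace_diagonal]
      simp [RCLike.ofReal_real_eq_id, hμdef]
    have := congrArg Matrix.trace (sub_sub_cancel (1 : Matrix (Fin N) (Fin N) ℝ) M)
    rw [Matrix.trace_sub, h1M, Matrix.trace_one] at this
    rw [← this, Finset.sum_sub_distrib]
    simp [mul_comm]
  -- eigenvalue bounds
  have hμ0 : ∀ i, 0 ≤ μ i := fun i => hIM.eigenvalues_nonneg i
  have hDM : star U * M * U = 1 - diagonal μ := by
    have hM' : M = (1 : Matrix (Fin N) (Fin N) ℝ) - (1 - M) := by abel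
    conv_lhs => rw [hM']
    rw [Matrix.mul_sub, Matrix.sub_mul, Matrix.mul_one, hU1, hspec]
  have hD : Matrix.PosSemidef ((1 : Matrix (Fin N) (Fin N) ℝ) - diagonal μ) := by
    rw [← hDM]
    have := hM.conjTranspose_mul_mul_same U
    simpa [Matrix.star_eq_conjTranspose] using this
  have hμ1 : ∀ i, μ i ≤ 1 := by
    intro i
    have h2 := hD.dotProduct_mulVec_nonneg (Pi.single i 1)
    have : (0:ℝ) ≤ 1 - μ i := by
      simpa [Matrix.sub_mulVec, Matrix.one_mulVec, Matrix.mulVec_single,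
        dotProduct, Pi.single_apply, Finset.sum_ite_eq'] using h2
    linarith
  -- sum of squares bound
  have sum_sq_le : ∀ (a : Fin N → ℝ), (∀ i, 0 ≤ a i) →
      (∑ i, (a i) ^ 2) ≤ (∑ i, a i) ^ 2 := by
    intro a ha
    calc (∑ i, (a i) ^ 2) ≤ ∑ i, a i * (∑ j, a j) := by
          refine Finset.sum_le_sum fun i _ => ?_
          rw [sq]
          exact mul_le_mul_of_nonneg_left
            (Finset.single_le_sum (fun j _ => ha j) (Finset.mem_univ i)) (ha i)
      _ = (∑ i, a i) ^ 2 := by rw [← Finset.sum_mul, sq]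
  -- final bound
  have hbound : (∑ i, g i ^ 2) ≤ M.trace ^ 2 := by
    have step1 : (∑ i, g i ^ 2) ≤ ∑ i, (1 - μ i) ^ 2 := by
      refine Finset.sum_le_sum fun i _ => ?_
      have h1 : μ i ≤ Real.sqrt (μ i) := by
        nlinarith [Real.sq_sqrt (hμ0 i), Real.sqrt_nonneg (μ i), hμ1 i]
      have h2 : Real.sqrt (μ i) ≤ 1 := Real.sqrt_le_one.mpr (hμ1 i)
      simp only [g]
      nlinarith [hμ0 i, hμ1 i]
    have step2 : (∑ i, (1 - μ i) ^ 2) ≤ (∑ i, (1 - μ i)) ^ 2 :=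
      sum_sq_le _ (fun i => by linarith [hμ1 i])
    rw [htr]
    linarith
  have htr0 : 0 ≤ M.trace := by
    rw [htr]
    exact Finset.sum_nonneg fun i _ => by linarith [hμ1 i]
  rw [frobNorm, hT]
  calc Real.sqrt (∑ i, g i ^ 2) ≤ Real.sqrt (M.trace ^ 2) :=
        Real.sqrt_le_sqrt hbound
    _ = M.trace := by rw [Real.sqrt_sq htr0]
end

section
/- Let H be a real inner product space, N a positive integer, and Φ, Ψ : Fin N → H orthonormal tuples. Let U₀ ∈ ℝ^{N×N} be an orthogonal matrix such that Σ_i ‖(Ψ·U₀) i − Φ i‖² ≤ Σ_i ‖(Ψ·U) i − Φ i‖² for every orthogonal matrix U. Then ‖U₀ − I‖_F ≤ 2 (Σ_i ‖Ψ i − Φ i‖²)^{1/2}. -/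
open Matrix
open scoped RealInnerProductSpace

/-- Action of a matrix on a tuple of vectors: `(Φ·A) i = ∑ j, A j i • Φ j`. -/
noncomputable def tupleMul {H : Type*} [NormedAddCommGroup H] [InnerProductSpace ℝ H]
    {N : ℕ} (Φ : Fin N → H) (A : Matrix (Fin N) (Fin N) ℝ) : Fin N → H :=
  fun i => ∑ j, A j i • Φ j

/-- If `U₀` optimally aligns the orthonormal tuple `Ψ` with the orthonormal tuple `Φ`,
then `‖U₀ − I‖_F ≤ 2 (∑ ‖Ψ i − Φ i‖²)^{1/2}`. -/
theorem frobNorm_optimal_rotation_sub_one_le {H : Type*} [NormedAddCommGroup H]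
    [InnerProductSpace ℝ H] {N : ℕ} (hN : 0 < N) (Φ Ψ : Fin N → H)
    (hΦ : ∀ i j, ⟪Φ i, Φ j⟫ = if i = j then 1 else 0)
    (hΨ : ∀ i j, ⟪Ψ i, Ψ j⟫ = if i = j then 1 else 0)
    (U₀ : Matrix (Fin N) (Fin N) ℝ) (hU₀ : U₀ᵀ * U₀ = 1)
    (hopt : ∀ U : Matrix (Fin N) (Fin N) ℝ, Uᵀ * U = 1 →
      (∑ i, ‖tupleMul Ψ U₀ i - Φ i‖ ^ 2) ≤ ∑ i, ‖tupleMul Ψ U i - Φ i‖ ^ 2) :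
    frobNorm (U₀ - 1) ≤ 2 * Real.sqrt (∑ i, ‖Ψ i - Φ i‖ ^ 2) := by
  have hΨo : Orthonormal ℝ Ψ := (orthonormal_iff_ite (𝕜 := ℝ)).mpr hΨ
  -- `tupleMul Ψ 1 = Ψ`
  have hid : ∀ i, tupleMul Ψ (1 : Matrix (Fin N) (Fin N) ℝ) i = Ψ i := by
    intro i
    simp [tupleMul, Matrix.one_apply]
  -- norm-squared of combinations of Ψ
  have hcomb : ∀ (c : Fin N → ℝ), ‖∑ j, c j • Ψ j‖ ^ 2 = ∑ j, (c j) ^ 2 := by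
    intro c
    have := hΨo.inner_sum c c Finset.univ
    rw [← real_inner_self_eq_norm_sq, this]
    simp [sq]
  -- work in PiLp 2
  set F : PiLp 2 (fun _ : Fin N => H) := WithLp.toLp 2 (fun i => tupleMul Ψ U₀ i - Ψ i) with hF
  set G : PiLp 2 (fun _ : Fin N => H) := WithLp.toLp 2 (fun i => Ψ i - Φ i) with hG
  have hFG : ∀ i, (F + G) i = tupleMul Ψ U₀ i - Φ i := by
    intro i; simp [hF, hG]
  have hGnorm : ‖G‖ = Real.sqrt (∑ i, ‖Ψ i - Φ i‖ ^ 2) := by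
    rw [PiLp.norm_eq_of_L2]
  have hFGnorm : ‖F + G‖ ≤ ‖G‖ := by
    rw [PiLp.norm_eq_of_L2, hGnorm]
    apply Real.sqrt_le_sqrt
    calc ∑ i, ‖(F + G) i‖ ^ 2 = ∑ i, ‖tupleMul Ψ U₀ i - Φ i‖ ^ 2 := by
            simp_rw [hFG]
      _ ≤ ∑ i, ‖tupleMul Ψ (1 : Matrix (Fin N) (Fin N) ℝ) i - Φ i‖ ^ 2 := by
            exact hopt 1 (by simp)
      _ = ∑ i, ‖Ψ i - Φ i‖ ^ 2 := by simp_rw [hid]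
  have hFfrob : frobNorm (U₀ - 1) = ‖F‖ := by
    rw [PiLp.norm_eq_of_L2, frobNorm]
    congr 1
    rw [Finset.sum_comm]
    apply Finset.sum_congr rfl
    intro i _
    have : F i = ∑ j, ((U₀ - 1) j i) • Ψ j := by
      simp only [hF, tupleMul, Matrix.sub_apply, sub_smul, Finset.sum_sub_distrib,
        Matrix.one_apply]
      congr 1
      simp [ite_smul]
    rw [this, hcomb]
  have htri : ‖F‖ ≤ ‖F + G‖ + ‖G‖ := by
    have : F = (F + G) - G := by abel
    nth_rewrite 1 [this]
    exact norm_sub_le _ _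
  rw [hFfrob, ← hGnorm]
  calc ‖F‖ ≤ ‖F + G‖ + ‖G‖ := htri
    _ ≤ ‖G‖ + ‖G‖ := by linarith
    _ = 2 * ‖G‖ := by ring
end

section
/- Let X and Y be real Hilbert spaces and a : X × Y → ℝ a continuous bilinear form. Assume: (i) there exists β > 0 such that for every x ∈ X, sup_{y ∈ Y, ‖y‖ ≤ 1} a(x, y) ≥ β‖x‖ (inf-sup condition); and (ii) for every nonzero y ∈ Y there exists x ∈ X with a(x, y) ≠ 0. Then for every continuous linear functional f : Y → ℝ there exists a unique x ∈ X such that a(x, y) = f(y) for all y ∈ Y, and this solution satisfies ‖x‖ ≤ β⁻¹ ‖f‖. -/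
/-- Banach–Nečas–Babuška: a continuous bilinear form on real Hilbert spaces satisfying
the inf-sup condition with constant `β > 0` and nondegeneracy in the second variable
yields, for each continuous linear functional `f`, a unique solution `x` of
`a(x, ·) = f`, and this solution satisfies `‖x‖ ≤ β⁻¹ ‖f‖`. -/
theorem banach_necas_babuska {X Y : Type*}
    [NormedAddCommGroup X] [InnerProductSpace ℝ X] [CompleteSpace X]
    [NormedAddCommGroup Y] [InnerProductSpace ℝ Y] [CompleteSpace Y]
    (a : X →L[ℝ] Y →L[ℝ] ℝ)
    (β : ℝ) (hβ : 0 < β)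
    (hinfsup : ∀ x : X, β * ‖x‖ ≤ ⨆ y ∈ {y : Y | ‖y‖ ≤ 1}, a x y)
    (hnondeg : ∀ y : Y, y ≠ 0 → ∃ x : X, a x y ≠ 0) :
    ∀ f : Y →L[ℝ] ℝ, ∃ x : X, (∀ y : Y, a x y = f y) ∧ ‖x‖ ≤ β⁻¹ * ‖f‖ ∧
      ∀ x' : X, (∀ y : Y, a x' y = f y) → x' = x := by
  -- lower bound on operator norm
  have hlb : ∀ x : X, β * ‖x‖ ≤ ‖a x‖ := by
    intro x
    refine (hinfsup x).trans ?_
    refine Real.iSup_le (fun y => Real.iSup_le (fun hy => ?_) (norm_nonneg _)) (norm_nonneg _)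
    calc a x y ≤ ‖a x y‖ := le_abs_self _
    _ ≤ ‖a x‖ * ‖y‖ := (a x).le_opNorm y
    _ ≤ ‖a x‖ * 1 := by gcongr; exact hy
    _ = ‖a x‖ := mul_one _
  -- Riesz representation map
  set T := fun x : X => (InnerProductSpace.toDual ℝ Y).symm (a x) with hT
  have hTinner : ∀ x y, (inner ℝ (T x) y : ℝ) = a x y := fun x y =>
    InnerProductSpace.toDual_symm_apply
  have hTnorm : ∀ x, ‖T x‖ = ‖a x‖ := fun x =>
    LinearIsometryEquiv.norm_map _ _
  let B : X →L[ℝ] Y :=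
    LinearMap.mkContinuous
      { toFun := T
        map_add' := by
          intro u v
          apply ext_inner_right ℝ
          intro y
          simp [hTinner, inner_add_left]
        map_smul' := by
          intro c u
          apply ext_inner_right ℝ
          intro y
          simp [hTinner, inner_smul_left] }
      ‖a‖ (fun x => by show ‖T x‖ ≤ ‖a‖ * ‖x‖; rw [hTnorm]; exact a.le_opNorm x)
  have hBval : ∀ x, B x = T x := fun _ => rfl
  have hblb : ∀ x : X, β * ‖x‖ ≤ ‖B x‖ := by
    intro x; rw [hBval, hTnorm]; exact hlb x
  have hanti : AntilipschitzWith ⟨β⁻¹, by positivity⟩ B :=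
    ContinuousLinearMap.antilipschitz_of_bound B (fun x => by
      change ‖x‖ ≤ β⁻¹ * ‖B x‖; rw [inv_mul_eq_div, le_div_iff₀ hβ]
      linarith [hblb x])
  have hclosed : IsClosed (Set.range B) :=
    hanti.isClosed_range B.uniformContinuous
  have hsurj : Function.Surjective B := by
    have h1 : (LinearMap.range (B : X →ₗ[ℝ] Y)).topologicalClosure = ⊤ := by
      rw [Submodule.topologicalClosure_eq_top_iff]
      rw [Submodule.eq_bot_iff]
      intro y hy
      by_contra hy0
      obtain ⟨x, hx⟩ := hnondeg y hy0
      apply hx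
      rw [← hTinner, ← hBval]
      exact (Submodule.mem_orthogonal _ _).1 hy (B x) (LinearMap.mem_range_self _ x)
    have h2 : (LinearMap.range (B : X →ₗ[ℝ] Y)).topologicalClosure = LinearMap.range (B : X →ₗ[ℝ] Y) := by
      apply SetLike.ext'
      exact (Submodule.topologicalClosure_coe _).trans hclosed.closure_eq
    intro z
    have : z ∈ LinearMap.range (B : X →ₗ[ℝ] Y) := by rw [← h2, h1]; trivial
    exact this
  intro f
  obtain ⟨x, hx⟩ := hsurj ((InnerProductSpace.toDual ℝ Y).symm f)
  have hsol : ∀ y, a x y = f y := by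
    intro y
    rw [← hTinner, ← hBval, hx]
    exact InnerProductSpace.toDual_symm_apply
  refine ⟨x, hsol, ?_, ?_⟩
  · have h := hblb x
    rw [hx, LinearIsometryEquiv.norm_map] at h
    rw [inv_mul_eq_div, le_div_iff₀ hβ]
    linarith
  · intro x' hx'
    have h0 : ∀ y, a (x' - x) y = 0 := by
      intro y; simp [hx' y, hsol y]
    have ha0 : a (x' - x) = 0 := by ext y; exact h0 y
    have h2 := hblb (x' - x)
    rw [hBval, hTnorm, ha0, norm_zero] at h2
    have h3 : ‖x' - x‖ = 0 := le_antisymm (by nlinarith) (norm_nonneg _)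
    exact sub_eq_zero.mp (norm_eq_zero.mp h3)
end

section
/- Let H be a real inner product space, N a positive integer, Φ, Ψ : Fin N → H orthonormal tuples, and Λ = (Λ_{ij}) ∈ ℝ^{N×N} a symmetric matrix. Then | Σ_{i,j} Λ_{ij} ⟨Φ j, Ψ i − Φ i⟩ | ≤ (‖Λ‖_F / 2) · Σ_i ‖Ψ i − Φ i‖². -/
open Matrix
open scoped RealInnerProductSpace

/-- Quadratic bound of the first-order term: for orthonormal tuples `Φ, Ψ` and a
symmetric matrix `Λ`, `|∑_{i,j} Λ_{ij} ⟨Φ j, Ψ i − Φ i⟩| ≤ (‖Λ‖_F/2) ∑ i ‖Ψ i − Φ i‖²`. -/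
theorem first_order_term_quadratic_bound {H : Type*} [NormedAddCommGroup H]
    [InnerProductSpace ℝ H] {N : ℕ} (hN : 0 < N) (Φ Ψ : Fin N → H)
    (hΦ : ∀ i j, ⟪Φ i, Φ j⟫ = if i = j then 1 else 0)
    (hΨ : ∀ i j, ⟪Ψ i, Ψ j⟫ = if i = j then 1 else 0)
    (Λ : Matrix (Fin N) (Fin N) ℝ) (hΛ : Λᵀ = Λ) :
    |∑ i, ∑ j, Λ i j * ⟪Φ j, Ψ i - Φ i⟫|
      ≤ (frobNorm Λ / 2) * ∑ i, ‖Ψ i - Φ i‖ ^ 2 := by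
  set d : Fin N → H := fun i => Ψ i - Φ i with hd
  have hΛsym : ∀ i j, Λ j i = Λ i j := fun i j => by
    simpa using congrFun (congrFun hΛ.symm j) i
  -- key identity: ⟪Φ j, d i⟫ + ⟪Φ i, d j⟫ = -⟪d i, d j⟫
  have key : ∀ i j, ⟪Φ j, d i⟫ + ⟪Φ i, d j⟫ = -⟪d i, d j⟫ := by
    intro i j
    have h1 : ⟪Ψ i, Φ j⟫ = ⟪Φ j, Ψ i⟫ := real_inner_comm _ _
    simp only [hd, inner_sub_left, inner_sub_right, hΦ, hΨ, h1]
    by_cases h : i = j <;> simp [h, eq_comm] <;> ring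
  -- step 1: the double sum equals -(1/2) * ∑∑ Λ i j * ⟪d i, d j⟫
  have step1 : ∑ i, ∑ j, Λ i j * ⟪Φ j, d i⟫
      = -(1/2) * ∑ i, ∑ j, Λ i j * ⟪d i, d j⟫ := by
    have swap : (∑ i, ∑ j, Λ i j * ⟪Φ j, d i⟫) = ∑ i, ∑ j, Λ i j * ⟪Φ i, d j⟫ := by
      rw [Finset.sum_comm]
      exact Finset.sum_congr rfl fun i _ => Finset.sum_congr rfl fun j _ => by
        rw [hΛsym i j]
    have h2 : (2 : ℝ) * ∑ i, ∑ j, Λ i j * ⟪Φ j, d i⟫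
        = ∑ i, ∑ j, Λ i j * (⟪Φ j, d i⟫ + ⟪Φ i, d j⟫) := by
      rw [two_mul]
      nth_rewrite 2 [swap]
      rw [← Finset.sum_add_distrib]
      refine Finset.sum_congr rfl fun i _ => ?_
      rw [← Finset.sum_add_distrib]
      refine Finset.sum_congr rfl fun j _ => ?_
      ring
    have h3 : (2 : ℝ) * ∑ i, ∑ j, Λ i j * ⟪Φ j, d i⟫
        = - ∑ i, ∑ j, Λ i j * ⟪d i, d j⟫ := by
      rw [h2, ← Finset.sum_neg_distrib]
      refine Finset.sum_congr rfl fun i _ => ?_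
      rw [← Finset.sum_neg_distrib]
      refine Finset.sum_congr rfl fun j _ => ?_
      rw [key i j]; ring
    linarith
  rw [step1]
  rw [abs_mul]
  have habs : |(-(1/2) : ℝ)| = 1/2 := by norm_num
  rw [habs]
  -- step 2: Cauchy-Schwarz bound
  have hdsq : ∀ i : Fin N, ‖d i‖ ^ 2 ≥ 0 := fun i => sq_nonneg _
  have sumd_nonneg : (0:ℝ) ≤ ∑ i, ‖d i‖ ^ 2 := Finset.sum_nonneg fun i _ => sq_nonneg _
  have step2 : |∑ i, ∑ j, Λ i j * ⟪d i, d j⟫| ≤ frobNorm Λ * ∑ i, ‖d i‖ ^ 2 := by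
    have hprod : ∑ i, ∑ j, Λ i j * ⟪d i, d j⟫
        = ∑ p ∈ Finset.univ ×ˢ (Finset.univ : Finset (Fin N)),
            Λ p.1 p.2 * ⟪d p.1, d p.2⟫ := by rw [Finset.sum_product]
    have hcs := Finset.sum_mul_sq_le_sq_mul_sq
      (Finset.univ ×ˢ (Finset.univ : Finset (Fin N)))
      (fun p => Λ p.1 p.2) (fun p => ⟪d p.1, d p.2⟫)
    have hA : ∑ p ∈ Finset.univ ×ˢ (Finset.univ : Finset (Fin N)), (Λ p.1 p.2) ^ 2
        = ∑ i, ∑ j, (Λ i j) ^ 2 := by rw [Finset.sum_product]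
    have hB : ∑ p ∈ Finset.univ ×ˢ (Finset.univ : Finset (Fin N)), (⟪d p.1, d p.2⟫ : ℝ) ^ 2
        ≤ (∑ i, ‖d i‖ ^ 2) ^ 2 := by
      have : ∑ p ∈ Finset.univ ×ˢ (Finset.univ : Finset (Fin N)), (⟪d p.1, d p.2⟫ : ℝ) ^ 2
          = ∑ i, ∑ j, (⟪d i, d j⟫ : ℝ) ^ 2 := by rw [Finset.sum_product]
      rw [this, sq, Finset.sum_mul_sum]
      refine Finset.sum_le_sum fun i _ => Finset.sum_le_sum fun j _ => ?_
      have := real_inner_mul_inner_self_le (d i) (d j)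
      have hni : ⟪d i, d i⟫ = ‖d i‖ ^ 2 := real_inner_self_eq_norm_sq _
      have hnj : ⟪d j, d j⟫ = ‖d j‖ ^ 2 := real_inner_self_eq_norm_sq _
      nlinarith [this]
    have hU2 : (∑ i, ∑ j, Λ i j * ⟪d i, d j⟫) ^ 2
        ≤ (∑ i, ∑ j, (Λ i j) ^ 2) * (∑ i, ‖d i‖ ^ 2) ^ 2 := by
      rw [hprod]
      refine hcs.trans ?_
      rw [hA]
      exact mul_le_mul_of_nonneg_left hB (Finset.sum_nonneg fun i _ =>
        Finset.sum_nonneg fun j _ => sq_nonneg _)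
    have hΛ2 : (0:ℝ) ≤ ∑ i, ∑ j, (Λ i j) ^ 2 := Finset.sum_nonneg fun i _ =>
      Finset.sum_nonneg fun j _ => sq_nonneg _
    calc |∑ i, ∑ j, Λ i j * ⟪d i, d j⟫|
        = Real.sqrt ((∑ i, ∑ j, Λ i j * ⟪d i, d j⟫) ^ 2) := (Real.sqrt_sq_eq_abs _).symm
      _ ≤ Real.sqrt ((∑ i, ∑ j, (Λ i j) ^ 2) * (∑ i, ‖d i‖ ^ 2) ^ 2) :=
          Real.sqrt_le_sqrt hU2
      _ = frobNorm Λ * ∑ i, ‖d i‖ ^ 2 := by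
          rw [Real.sqrt_mul hΛ2, Real.sqrt_sq sumd_nonneg]; rfl
  calc (1/2) * |∑ i, ∑ j, Λ i j * ⟪d i, d j⟫|
      ≤ (1/2) * (frobNorm Λ * ∑ i, ‖d i‖ ^ 2) := by linarith
    _ = (frobNorm Λ / 2) * ∑ i, ‖d i‖ ^ 2 := by ring
end
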